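/- For all n ≥ 0 and r ≥ 1: ((r-1)!/(1-λ)^{r-1}) S_λ(n,r-1) = ∑_{l=0}^{n} [ C(n,l) ∑_{m=0}^{min(r,l)} C(r,m)/(1-λ)^m · m! S(l,m) ] H_{n-l}(λ), where H_k(λ) are the Frobenius-Euler numbers, S_λ(n,k) = (1/k!) ∑_{j=0}^{k} C(k,j)(-λ)^{k-j} j^n, and S(l,m) are the Stirling numbers of the second kind. -/

import Mathlib

open Finset PowerSeries

/-- `m! S(l,m) = ∑_{k₁+⋯+k_m = l, k_j ≥ 1} (l choose k₁,…,k_m)`, i.e. `m!` times the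
Stirling number of the second kind. -/
def mFactStirling (l m : ℕ) : ℕ :=
  ∑ k ∈ (Finset.Nat.antidiagonalTuple m l).filter (fun k => ∀ j, 1 ≤ k j),
    Nat.multinomial Finset.univ k

lemma mFactStirling_eq_zero {l m : ℕ} (h : l < m) : mFactStirling l m = 0 := by
  rw [mFactStirling]
  rw [Finset.sum_eq_zero]
  intro k hk
  exfalso
  simp only [Finset.mem_filter, Finset.Nat.mem_antidiagonalTuple] at hk
  have : m ≤ l := by
    calc m = ∑ _j : Fin m, 1 := by simp
    _ ≤ ∑ j, k j := Finset.sum_le_sum fun j _ => hk.2 j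
    _ = l := hk.1
  omega

lemma coeff_pow_tuple (m n : ℕ) (φ : PowerSeries ℂ) :
    (coeff n) (φ ^ m) = ∑ k ∈ Finset.Nat.antidiagonalTuple m n, ∏ j, (coeff (k j)) φ := by
  rw [PowerSeries.coeff_pow]
  refine Finset.sum_nbij' (fun l => fun j : Fin m => l j)
    (fun k => Finsupp.onFinset (range m) (fun i => if h : i < m then k ⟨i, h⟩ else 0)
      (by intro i hi; by_contra hmem; simp [Finset.mem_range] at hmem; simp [show ¬ i < m by omega] at hi))
    ?_ ?_ ?_ ?_ ?_
  · intro l hl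
    simp only [Finset.mem_finsuppAntidiag] at hl
    rw [Finset.Nat.mem_antidiagonalTuple, ← hl.1, Finset.sum_range]
  · intro k hk
    rw [Finset.Nat.mem_antidiagonalTuple] at hk
    simp only [Finset.mem_finsuppAntidiag]
    constructor
    · rw [Finset.sum_range (fun i => _)]
      rw [← hk]
      apply Finset.sum_congr rfl
      intro j _
      simp [Finsupp.onFinset_apply, j.isLt]
    · exact Finsupp.support_onFinset_subset
  · intro l hl
    simp only [Finset.mem_finsuppAntidiag] at hl
    ext i
    simp only [Finsupp.onFinset_apply]
    by_cases h : i < m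
    · simp [h]
    · rw [dif_neg h]
      symm
      by_contra hne
      have : i ∈ l.support := Finsupp.mem_support_iff.mpr hne
      have := hl.2 this
      simp only [Finset.mem_range] at this
      omega
  · intro k hk
    ext j
    simp [Finsupp.onFinset_apply, j.isLt]
  · intro l hl
    rw [Finset.prod_range (fun i => _)]

lemma coeff_exp_sub_one (k : ℕ) :
    (coeff k) (exp ℂ - 1) = if k = 0 then 0 else ((k.factorial : ℂ))⁻¹ := by
  rw [map_sub, coeff_exp, coeff_one]
  rcases eq_or_ne k 0 with h | h <;> simp [h, Nat.factorial]

lemma mFactStirling_egf (m l : ℕ) :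
    (coeff l) ((exp ℂ - 1) ^ m) = (mFactStirling l m : ℂ) * ((l.factorial : ℂ))⁻¹ := by
  rw [coeff_pow_tuple]
  rw [← Finset.sum_filter_of_ne (p := fun k : Fin m → ℕ => ∀ j, 1 ≤ k j)
    (by
      intro k _ hne j
      by_contra hj
      have hj0 : k j = 0 := by omega
      apply hne
      apply Finset.prod_eq_zero (Finset.mem_univ j)
      rw [coeff_exp_sub_one, if_pos hj0])]
  rw [mFactStirling, Nat.cast_sum, Finset.sum_mul]
  refine Finset.sum_congr rfl fun k hk => ?_
  simp only [Finset.mem_filter, Finset.Nat.mem_antidiagonalTuple] at hk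
  have hspec := Nat.multinomial_spec Finset.univ k
  rw [hk.1] at hspec
  have hcast : ((∏ j, (k j).factorial : ℕ) : ℂ) * (Nat.multinomial Finset.univ k : ℂ)
      = (l.factorial : ℂ) := by exact_mod_cast congrArg (Nat.cast : ℕ → ℂ) hspec
  have hP : ((∏ j, (k j).factorial : ℕ) : ℂ) ≠ 0 := by
    simp only [Nat.cast_prod]
    exact Finset.prod_ne_zero_iff.mpr fun j _ => Nat.cast_ne_zero.mpr (Nat.factorial_ne_zero _)
  have hL : ((l.factorial : ℕ) : ℂ) ≠ 0 := Nat.cast_ne_zero.mpr (Nat.factorial_ne_zero _)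
  have hprod : ∏ j, (coeff (k j)) (exp ℂ - 1) = (((∏ j, (k j).factorial : ℕ) : ℂ))⁻¹ := by
    rw [Nat.cast_prod, ← Finset.prod_inv_distrib]
    refine Finset.prod_congr rfl fun j _ => ?_
    rw [coeff_exp_sub_one, if_neg (by have := hk.2 j; omega)]
  rw [hprod]
  push_cast at hcast hP ⊢
  rw [eq_comm, mul_inv_eq_iff_eq_mul₀ hL, eq_comm, inv_mul_eq_iff_eq_mul₀ hP]
  linear_combination -hcast

lemma coeff_exp_sub_C_pow (lam : ℂ) (s n : ℕ) :
    (coeff n) ((exp ℂ - C (R := ℂ) lam) ^ s) =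
      (∑ j ∈ range (s + 1), (s.choose j : ℂ) * (-lam) ^ (s - j) * (j : ℂ) ^ n) *
        ((n.factorial : ℂ))⁻¹ := by
  have h : exp ℂ - C (R := ℂ) lam = exp ℂ + C (R := ℂ) (-lam) := by rw [map_neg]; ring
  rw [h, add_pow, map_sum, Finset.sum_mul]
  refine Finset.sum_congr rfl fun j _ => ?_
  rw [exp_pow_eq_rescale_exp, ← map_pow,
    show ((s.choose j : ℕ) : ℂ⟦X⟧) = C (R := ℂ) (s.choose j : ℂ) from (map_natCast (C (R := ℂ)) _).symm,
    PowerSeries.coeff_mul_C, PowerSeries.coeff_mul_C, coeff_rescale, PowerSeries.coeff_exp]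
  simp only [one_div, map_inv₀, map_natCast]
  ring

/-- For `r ≥ 1`:
`((r-1)!/(1-λ)^{r-1}) S_λ(n,r-1) = ∑_{l=0}^{n} [C(n,l) ∑_{m=0}^{min(r,l)} C(r,m)/(1-λ)ᵐ · m!S(l,m)] H_{n-l}(λ)`,
where `H k` are the Frobenius-Euler numbers and
`S_λ(n,k) = (1/k!) ∑_{j=0}^{k} C(k,j)(-λ)^{k-j} jⁿ`. -/
theorem lambda_stirling_frobenius_euler_numbers (lam : ℂ) (hlam : lam ≠ 1)
    (H : ℕ → ℂ)
    (hH : (PowerSeries.mk fun n => H n * ((n.factorial : ℂ))⁻¹) *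
        (PowerSeries.exp ℂ - PowerSeries.C (R := ℂ) lam) = PowerSeries.C (R := ℂ) (1 - lam))
    (n r : ℕ) (hr : 1 ≤ r) :
    (((r - 1).factorial : ℂ) / (1 - lam) ^ (r - 1)) *
        ((((r - 1).factorial : ℂ))⁻¹ *
          ∑ j ∈ range ((r - 1) + 1),
            ((r - 1).choose j : ℂ) * (-lam) ^ ((r - 1) - j) * (j : ℂ) ^ n) =
      ∑ l ∈ range (n + 1),
        ((n.choose l : ℂ) * ∑ m ∈ range (min r l + 1),
          (r.choose m : ℂ) / (1 - lam) ^ m * (mFactStirling l m : ℂ)) * H (n - l) := by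
  have h1 : (1 : ℂ) - lam ≠ 0 := sub_ne_zero.mpr fun h => hlam h.symm
  obtain ⟨s, rfl⟩ : ∃ s, r = s + 1 := ⟨r - 1, (Nat.succ_pred_eq_of_pos hr).symm⟩
  simp only [Nat.add_sub_cancel]
  set As : ℂ⟦X⟧ := ∑ m ∈ range (s + 2),
    C (R := ℂ) (((s + 1).choose m : ℂ) / (1 - lam) ^ m) * (exp ℂ - 1) ^ m with hAs
  set Hs : ℂ⟦X⟧ := PowerSeries.mk fun k => H k * ((k.factorial : ℂ))⁻¹ with hHsdef
  have hcoeffAs : ∀ l, (coeff l) As =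
      (∑ m ∈ range (min (s + 1) l + 1),
          ((s + 1).choose m : ℂ) / (1 - lam) ^ m * (mFactStirling l m : ℂ))
        * ((l.factorial : ℂ))⁻¹ := by
    intro l
    rw [hAs, map_sum]
    simp only [coeff_C_mul, mFactStirling_egf]
    rw [show (∑ x ∈ range (s + 2), ((s + 1).choose x : ℂ) / (1 - lam) ^ x *
        ((mFactStirling l x : ℂ) * ((l.factorial : ℂ))⁻¹))
      = (∑ x ∈ range (s + 2), ((s + 1).choose x : ℂ) / (1 - lam) ^ x *
          (mFactStirling l x : ℂ)) * ((l.factorial : ℂ))⁻¹ by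
        rw [Finset.sum_mul]; exact Finset.sum_congr rfl fun x _ => by ring]
    congr 1
    symm
    apply Finset.sum_subset
    · intro m hm
      rw [Finset.mem_range] at hm ⊢
      omega
    · intro m hm1 hm2
      rw [Finset.mem_range] at hm1 hm2
      rw [mFactStirling_eq_zero (by omega : l < m)]
      simp
  have hCA : C (R := ℂ) ((1 - lam) ^ (s + 1)) * As = (exp ℂ - C (R := ℂ) lam) ^ (s + 1) := by
    have h2 : exp ℂ - C (R := ℂ) lam = (exp ℂ - 1) + C (R := ℂ) (1 - lam) := by
      rw [map_sub, map_one]; ring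
    rw [h2, add_pow, hAs, Finset.mul_sum]
    refine Finset.sum_congr rfl fun m hm => ?_
    rw [Finset.mem_range] at hm
    have hm' : m ≤ s + 1 := by omega
    have key : (1 - lam) ^ (s + 1) * (((s + 1).choose m : ℂ) / (1 - lam) ^ m)
        = (1 - lam) ^ (s + 1 - m) * (((s + 1).choose m : ℂ)) := by
      have hpow : (1 - lam) ^ (s + 1) = (1 - lam) ^ m * (1 - lam) ^ (s + 1 - m) := by
        rw [← pow_add]
        congr 1
        omega
      rw [hpow]
      field_simp
    calc C (R := ℂ) ((1 - lam) ^ (s + 1)) * (C (R := ℂ) ((((s + 1).choose m : ℂ)) / (1 - lam) ^ m) * (exp ℂ - 1) ^ m)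
        = C (R := ℂ) ((1 - lam) ^ (s + 1) * ((((s + 1).choose m : ℂ)) / (1 - lam) ^ m)) * (exp ℂ - 1) ^ m := by
          rw [map_mul]; ring
      _ = (exp ℂ - 1) ^ m * C (R := ℂ) ((1 - lam) ^ (s + 1 - m)) * C (R := ℂ) (((s + 1).choose m : ℂ)) := by
          rw [key, map_mul]; ring
      _ = (exp ℂ - 1) ^ m * (C (R := ℂ) (1 - lam)) ^ (s + 1 - m) * (((s + 1).choose m : ℕ) : ℂ⟦X⟧) := by
          rw [map_pow, map_natCast]
  have hprod : C (R := ℂ) ((1 - lam) ^ (s + 1)) * (As * Hs) = C (R := ℂ) (1 - lam) * (exp ℂ - C (R := ℂ) lam) ^ s := by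
    rw [← mul_assoc, hCA, pow_succ, mul_assoc, mul_comm (exp ℂ - C (R := ℂ) lam) Hs, hH, mul_comm]
  have hco := congrArg (coeff n) hprod
  rw [coeff_C_mul, coeff_C_mul, coeff_exp_sub_C_pow] at hco
  have fn : ((n.factorial : ℕ) : ℂ) ≠ 0 := Nat.cast_ne_zero.mpr (Nat.factorial_ne_zero _)
  have fs : ((s.factorial : ℕ) : ℂ) ≠ 0 := Nat.cast_ne_zero.mpr (Nat.factorial_ne_zero _)
  have hps : ((1 : ℂ) - lam) ^ s ≠ 0 := pow_ne_zero _ h1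
  have hRHS : ∑ l ∈ range (n + 1),
        ((n.choose l : ℂ) * ∑ m ∈ range (min (s + 1) l + 1),
          ((s + 1).choose m : ℂ) / (1 - lam) ^ m * (mFactStirling l m : ℂ)) * H (n - l)
      = (n.factorial : ℂ) * (coeff n) (As * Hs) := by
    rw [PowerSeries.coeff_mul, Finset.Nat.sum_antidiagonal_eq_sum_range_succ_mk, Finset.mul_sum]
    refine Finset.sum_congr rfl fun l hl => ?_
    rw [Finset.mem_range] at hl
    have hl' : l ≤ n := by omega
    rw [hcoeffAs l, hHsdef, coeff_mk, Nat.cast_choose ℂ hl']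
    have f1 : ((l.factorial : ℕ) : ℂ) ≠ 0 := Nat.cast_ne_zero.mpr (Nat.factorial_ne_zero _)
    have f2 : (((n - l).factorial : ℕ) : ℂ) ≠ 0 := Nat.cast_ne_zero.mpr (Nat.factorial_ne_zero _)
    field_simp
  rw [hRHS]
  have hSig : (∑ j ∈ range (s + 1), ((s.choose j : ℂ)) * (-lam) ^ (s - j) * (j : ℂ) ^ n)
      = (1 - lam) ^ s * ((n.factorial : ℂ) * (coeff n) (As * Hs)) := by
    have h3 : (1 - lam) * ((∑ j ∈ range (s + 1), ((s.choose j : ℂ)) * (-lam) ^ (s - j) * (j : ℂ) ^ n)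
          * ((n.factorial : ℂ))⁻¹)
        = (1 - lam) * ((1 - lam) ^ s * (coeff n) (As * Hs)) := by
      rw [← hco, pow_succ]
      ring
    have h4 := mul_left_cancel₀ h1 h3
    calc (∑ j ∈ range (s + 1), ((s.choose j : ℂ)) * (-lam) ^ (s - j) * (j : ℂ) ^ n)
        = (∑ j ∈ range (s + 1), ((s.choose j : ℂ)) * (-lam) ^ (s - j) * (j : ℂ) ^ n)
            * ((n.factorial : ℂ))⁻¹ * (n.factorial : ℂ) := by field_simp
      _ = (1 - lam) ^ s * (coeff n) (As * Hs) * (n.factorial : ℂ) := by rw [h4]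
      _ = (1 - lam) ^ s * ((n.factorial : ℂ) * (coeff n) (As * Hs)) := by ring
  rw [hSig]
  field_simp
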